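/- Let λ be a solution of the generalized characteristic equation such that limsup_{t→∞} ∫_0^r θ·|exp(−∫_{t−θ}^t λ(s) ds)| d‖η(t)‖(θ) < 1, and let x be a solution of the RFDE x'(t) = ∫_0^r x(t−θ) dη(t)(θ). If the limit L := lim_{t→∞} λ(t)·x(t)·exp(−∫_{t₀}^t λ(s) ds) exists, then lim_{t→∞} x'(t)·exp(−∫_{t₀}^t λ(s) ds) exists and equals L. -/

import Mathlib

open MeasureTheory Filter Topology

open Set

lemma aux_mvt {y Y' : ℝ → ℂ} {a b : ℝ} (hab : a < b)
    (hyc : ContinuousOn y (Set.Icc a b))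
    (hyd : ∀ s ∈ Set.Ioo a b, HasDerivAt y (Y' s) s) :
    ∃ c, a < c ∧ c < b ∧ ‖y b - y a‖ ≤ ‖Y' c‖ * (b - a) := by
  by_cases hd0 : y b - y a = 0
  · refine ⟨(a+b)/2, by linarith, by linarith, ?_⟩
    rw [hd0]
    simp only [norm_zero]
    have : 0 < b - a := by linarith
    positivity
  set d := y b - y a with hd
  have hφd : ∀ s ∈ Set.Ioo a b,
      HasDerivAt (fun s => ((starRingEnd ℂ) d * y s).re) (((starRingEnd ℂ) d * Y' s).re) s :=
    fun s hs => Complex.reCLM.hasFDerivAt.comp_hasDerivAt s ((hyd s hs).const_mul _)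
  have hφc : ContinuousOn (fun s => ((starRingEnd ℂ) d * y s).re) (Set.Icc a b) :=
    Complex.continuous_re.comp_continuousOn (continuousOn_const.mul hyc)
  obtain ⟨c, hc, hceq⟩ := exists_hasDerivAt_eq_slope _ _ hab hφc hφd
  have h1 : ((starRingEnd ℂ) d * y b).re - ((starRingEnd ℂ) d * y a).re = ‖d‖^2 := by
    have e1 : (starRingEnd ℂ) d * y b - (starRingEnd ℂ) d * y a = (starRingEnd ℂ) d * d := by
      rw [hd]; ring
    have e2 : ((starRingEnd ℂ) d * d).re = ‖d‖^2 := by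
      rw [Complex.sq_norm, Complex.normSq_apply]
      simp [Complex.mul_re]
    calc ((starRingEnd ℂ) d * y b).re - ((starRingEnd ℂ) d * y a).re
        = ((starRingEnd ℂ) d * y b - (starRingEnd ℂ) d * y a).re := by simp [Complex.sub_re]
      _ = ‖d‖^2 := by rw [e1, e2]
  have h2 : ((starRingEnd ℂ) d * Y' c).re ≤ ‖d‖ * ‖Y' c‖ := by
    calc ((starRingEnd ℂ) d * Y' c).re ≤ ‖(starRingEnd ℂ) d * Y' c‖ := Complex.re_le_norm _
      _ = ‖d‖ * ‖Y' c‖ := by rw [norm_mul, RCLike.norm_conj]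
  have hdpos : 0 < ‖d‖ := norm_pos_iff.2 hd0
  have h3 : ‖d‖^2 / (b - a) ≤ ‖d‖ * ‖Y' c‖ := by
    rw [h1] at hceq
    rw [← hceq]; exact h2
  refine ⟨c, hc.1, hc.2, ?_⟩
  have hba : 0 < b - a := by linarith
  rw [div_le_iff₀ hba] at h3
  have := h3
  nlinarith [this, hdpos]

lemma aux_loclip {f : ℝ → ℂ} {f' : ℂ} {a b c : ℝ} (hc : c ∈ Set.Icc a b)
    (hcont : ContinuousOn f (Set.Icc a b)) (hd : HasDerivAt f f' c) :
    ∃ M, 0 < M ∧ ∀ s ∈ Set.Icc a b, ‖f s - f c‖ ≤ M * |s - c| := by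
  have hslope : Tendsto (fun s => ‖slope f c s‖) (𝓝[≠] c) (𝓝 ‖f'‖) :=
    (hasDerivAt_iff_tendsto_slope.1 hd).norm
  have hev : ∀ᶠ s in 𝓝[≠] c, ‖slope f c s‖ < ‖f'‖ + 1 :=
    hslope.eventually_lt_const (by linarith [norm_nonneg f'])
  rw [eventually_nhdsWithin_iff] at hev
  rw [Metric.eventually_nhds_iff] at hev
  obtain ⟨δ, hδpos, hδ⟩ := hev
  obtain ⟨C, hC⟩ := (isCompact_Icc : IsCompact (Set.Icc a b)).exists_bound_of_continuousOn hcont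
  have hC0 : (0:ℝ) ≤ C := le_trans (norm_nonneg _) (hC c hc)
  refine ⟨max (‖f'‖ + 1) ((2*C+2)/δ), lt_max_of_lt_left (by linarith [norm_nonneg f']), ?_⟩
  intro s hs
  by_cases hsc : s = c
  · subst hsc; simp
  by_cases hnear : dist s c < δ
  · have h1 := hδ hnear (by simpa using hsc)
    have h2 : ‖slope f c s‖ = ‖f s - f c‖ / |s - c| := by
      rw [slope_def_module, norm_smul]
      simp [abs_sub_comm]
      rw [div_eq_inv_mul]
    have h3 : (0:ℝ) < |s - c| := by
      rw [abs_pos, sub_ne_zero]; exact hsc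
    rw [h2, div_lt_iff₀ h3] at h1
    calc ‖f s - f c‖ ≤ (‖f'‖ + 1) * |s - c| := h1.le
      _ ≤ max (‖f'‖ + 1) ((2*C+2)/δ) * |s - c| :=
        mul_le_mul_of_nonneg_right (le_max_left _ _) (abs_nonneg _)
  · push_neg at hnear
    have hdist : δ ≤ |s - c| := by rwa [Real.dist_eq] at hnear
    calc ‖f s - f c‖ ≤ ‖f s‖ + ‖f c‖ := norm_sub_le _ _
      _ ≤ 2*C + 2 := by have := hC s hs; have := hC c hc; linarith
      _ = ((2*C+2)/δ) * δ := by field_simp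
      _ ≤ ((2*C+2)/δ) * |s - c| := by
          apply mul_le_mul_of_nonneg_left hdist
          positivity
      _ ≤ max (‖f'‖ + 1) ((2*C+2)/δ) * |s - c| :=
        mul_le_mul_of_nonneg_right (le_max_right _ _) (abs_nonneg _)


/- Context: for each `t ≥ t₀`, the complex measure `η t` on `[0, r]` is given in polar
form `dη(t) = h t dν(t)`, where `ν t` is a finite (nonnegative) measure supported on
`[0, r]` and `‖h t θ‖ = 1` for `ν t`-a.e. `θ`; its total variation measure is then
`‖η t‖ = ν t`.  A solution of the RFDE `x'(t) = ∫_0^r x(t-θ) dη(t)(θ)` is a continuous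
function on `[t₀ - r, ∞)`, differentiable on `[t₀, ∞)` (right derivative at `t₀`),
satisfying the equation there; `λ` is a solution of the generalized characteristic
equation `λ(t) = ∫_0^r exp(-∫_{t-θ}^t λ(s) ds) dη(t)(θ)`. -/
set_option maxHeartbeats 2000000 in
theorem stmt2
    (r t₀ : ℝ) (hr : 0 < r)
    (ν : ℝ → Measure ℝ)
    (hfin : ∀ t, t₀ ≤ t → IsFiniteMeasure (ν t))
    (hsupp : ∀ t, t₀ ≤ t → ν t (Set.Icc 0 r)ᶜ = 0)
    (h : ℝ → ℝ → ℂ)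
    (hh : ∀ t, t₀ ≤ t → ∀ᵐ θ ∂(ν t), ‖h t θ‖ = 1)
    -- λ is a solution of the generalized characteristic equation
    (lam : ℝ → ℂ)
    (hlamc : ContinuousOn lam (Set.Ici (t₀ - r)))
    (hlamint : ∀ t, t₀ ≤ t → IntegrableOn
      (fun θ => Complex.exp (-(∫ s in (t - θ)..t, lam s)) * h t θ) (Set.Icc 0 r) (ν t))
    (hlam : ∀ t, t₀ ≤ t →
      lam t = ∫ θ in Set.Icc 0 r, Complex.exp (-(∫ s in (t - θ)..t, lam s)) * h t θ ∂(ν t))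
    -- the smallness condition: limsup_{t→∞} ∫_0^r θ ‖exp(-∫_{t-θ}^t λ)‖ d‖η t‖(θ) < 1
    (hbdd : IsBoundedUnder (· ≤ ·) atTop (fun t => ∫ θ in Set.Icc 0 r,
      θ * ‖Complex.exp (-(∫ s in (t - θ)..t, lam s))‖ ∂(ν t)))
    (hV : limsup (fun t => ∫ θ in Set.Icc 0 r,
      θ * ‖Complex.exp (-(∫ s in (t - θ)..t, lam s))‖ ∂(ν t)) atTop < 1)
    -- x is a solution of the RFDE
    (x : ℝ → ℂ)
    (hxc : ContinuousOn x (Set.Ici (t₀ - r)))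
    (hxint : ∀ t, t₀ ≤ t →
      IntegrableOn (fun θ => x (t - θ) * h t θ) (Set.Icc 0 r) (ν t))
    (x' : ℝ → ℂ)
    (hx : ∀ t, t₀ ≤ t → HasDerivWithinAt x (x' t) (Set.Ici t₀) t)
    (hxeq : ∀ t, t₀ ≤ t →
      x' t = ∫ θ in Set.Icc 0 r, x (t - θ) * h t θ ∂(ν t))
    -- the limit L of λ(t)·x(t)·exp(-∫_{t₀}^t λ) exists
    (L : ℂ)
    (hL : Tendsto (fun t => lam t * x t * Complex.exp (-(∫ s in t₀..t, lam s)))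
      atTop (𝓝 L)) :
    Tendsto (fun t => x' t * Complex.exp (-(∫ s in t₀..t, lam s))) atTop (𝓝 L) := by
  -- extended lam and its primitive
  set lx : ℝ → ℂ := fun s => lam (max s (t₀ - r)) with hlx
  have hlxc : Continuous lx :=
    hlamc.comp_continuous (continuous_id.max continuous_const)
      (fun s => mem_Ici.2 (le_max_right _ _))
  have hlxeq : ∀ s, t₀ - r ≤ s → lx s = lam s := by
    intro s hs; rw [hlx]; simp only [max_eq_left hs]
  set P : ℝ → ℂ := fun u => ∫ s in t₀..u, lx s with hPdef
  have hPc : Continuous P :=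
    intervalIntegral.continuous_primitive (fun a b => hlxc.intervalIntegrable a b) t₀
  have hPd : ∀ t, HasDerivAt P (lx t) t := by
    intro t
    exact intervalIntegral.integral_hasDerivAt_right (hlxc.intervalIntegrable _ _)
      ⟨Set.univ, univ_mem, hlxc.aestronglyMeasurable.restrict⟩ hlxc.continuousAt
  have hPeqI : ∀ t, t₀ - r ≤ t → (∫ s in t₀..t, lam s) = P t := by
    intro t ht
    rw [hPdef]
    apply intervalIntegral.integral_congr
    intro s hs
    have hmin : t₀ - r ≤ min t₀ t := le_min (by linarith) ht
    exact (hlxeq s (le_trans hmin hs.1)).symm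
  have hIeq : ∀ t θ, t₀ ≤ t → 0 ≤ θ → θ ≤ r →
      (∫ s in (t - θ)..t, lam s) = P t - P (t - θ) := by
    intro t θ ht h0 hθr
    have h1 : (∫ s in (t - θ)..t, lam s) = ∫ s in (t - θ)..t, lx s := by
      apply intervalIntegral.integral_congr
      intro s hs
      rw [Set.uIcc_of_le (by linarith : t - θ ≤ t)] at hs
      exact (hlxeq s (by linarith [hs.1])).symm
    rw [h1, hPdef]
    exact (intervalIntegral.integral_interval_sub_left (hlxc.intervalIntegrable _ _)
      (hlxc.intervalIntegrable _ _)).symm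
  -- the renormalized solution y and its derivative Yd
  set E : ℝ → ℂ := fun u => Complex.exp (-P u) with hEdef
  set y : ℝ → ℂ := fun u => x u * E u with hydef
  set Yd : ℝ → ℂ := fun u => (x' u - lam u * x u) * E u with hYddef
  set g : ℝ → ℝ := fun u => ‖Yd u‖ with hgdef
  have hEc : Continuous E := hPc.neg.cexp
  have hyc : ContinuousOn y (Set.Ici (t₀ - r)) := hxc.mul hEc.continuousOn
  have hEd : ∀ t, HasDerivAt E (-(lx t) * E t) t := by
    intro t
    have := (hPd t).neg.cexp
    convert this using 1
    show -(lx t) * Complex.exp (-P t) = _; simp only [Pi.neg_apply]; ring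
    rfl
  have hyd : ∀ t, t₀ ≤ t → HasDerivWithinAt y (Yd t) (Set.Ici t₀) t := by
    intro t ht
    have hE' : HasDerivWithinAt E (-(lam t) * E t) (Set.Ici t₀) t := by
      have h1 := (hEd t).hasDerivWithinAt (s := Set.Ici t₀)
      rwa [hlxeq t (by linarith)] at h1
    have h2 := (hx t ht).mul hE'
    have h3 : x' t * E t + x t * (-(lam t) * E t) = Yd t := by rw [hYddef]; ring
    rwa [h3] at h2
  have hydAt : ∀ t, t₀ < t → HasDerivAt y (Yd t) t := fun t ht =>
    (hyd t ht.le).hasDerivAt (Ici_mem_nhds ht)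
  -- mean value inequality with witness
  have hmvt : ∀ a b : ℝ, t₀ ≤ a → a < b →
      ∃ c, a < c ∧ c < b ∧ ‖y b - y a‖ ≤ g c * (b - a) := by
    intro a b ha hab
    have hsub : Set.Icc a b ⊆ Set.Ici (t₀ - r) := fun s hs => by
      simp only [Set.mem_Ici]; linarith [hs.1]
    exact aux_mvt hab (hyc.mono hsub) (fun s hs => hydAt s (lt_of_le_of_lt ha hs.1))
  -- pointwise backward Lipschitz-type bound
  have hBndAt : ∀ t, t₀ < t → ∃ M, 0 < M ∧ ∀ θ, 0 ≤ θ → θ ≤ r →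
      ‖y t - y (t - θ)‖ ≤ M * θ := by
    intro t ht
    have hsub : ContinuousOn y (Set.Icc (t - r) t) := hyc.mono (fun s hs => by
      simp only [Set.mem_Ici]; linarith [hs.1])
    obtain ⟨M, hM, hMs⟩ := aux_loclip (c := t) ⟨by linarith, le_refl t⟩ hsub (hydAt t ht)
    refine ⟨M, hM, fun θ h0 hr' => ?_⟩
    have h1 := hMs (t - θ) ⟨by linarith, by linarith⟩
    rw [norm_sub_rev] at h1
    have h2 : |t - θ - t| = θ := by rw [show t - θ - t = -θ by ring, abs_neg, abs_of_nonneg h0]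
    rwa [h2] at h1
  -- forward version
  have hFwd : ∀ v b, t₀ < v → v < b → ∃ M, 0 < M ∧ ∀ σ, v ≤ σ → σ ≤ b →
      ‖y σ - y v‖ ≤ M * (σ - v) := by
    intro v b hv hvb
    have hsub : ContinuousOn y (Set.Icc v b) := hyc.mono (fun s hs => by
      simp only [Set.mem_Ici]; linarith [hs.1])
    obtain ⟨M, hM, hMs⟩ := aux_loclip (c := v) ⟨le_refl v, hvb.le⟩ hsub (hydAt v hv)
    refine ⟨M, hM, fun σ h1 h2 => ?_⟩
    have h3 := hMs σ ⟨h1, h2⟩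
    rwa [abs_of_nonneg (by linarith)] at h3
  -- choice of q and T₀
  set Vf : ℝ → ℝ := fun t => ∫ θ in Set.Icc 0 r,
      θ * ‖Complex.exp (-(∫ s in (t - θ)..t, lam s))‖ ∂(ν t) with hVfdef
  set q : ℝ := max (1/2) ((limsup Vf atTop + 1)/2) with hqdef
  have hq1 : q < 1 := max_lt (by norm_num) (by linarith)
  have hqhalf : (1/2 : ℝ) ≤ q := le_max_left _ _
  have hq0 : 0 < q := by linarith
  have hVq : ∀ᶠ t in atTop, Vf t < q := by
    apply eventually_lt_of_limsup_lt _ hbdd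
    calc limsup Vf atTop < (limsup Vf atTop + 1)/2 := by linarith
      _ ≤ q := le_max_right _ _
  obtain ⟨T₀', hT₀'⟩ := eventually_atTop.1 hVq
  set T₀ : ℝ := max T₀' (t₀ + r) with hT₀def
  have hT₀t₀r : t₀ + r ≤ T₀ := le_max_right _ _
  have hT₀V : ∀ t, T₀ ≤ t → Vf t ≤ q := fun t ht =>
    (hT₀' t (le_trans (le_max_left _ _) ht)).le
  have hT₀t₀ : t₀ < T₀ := by linarith
  -- KEY estimate
  have key1 : ∀ t M, T₀ ≤ t → 0 ≤ M →
      (∀ θ, 0 < θ → θ ≤ r → ‖y t - y (t - θ)‖ ≤ M * θ) → g t ≤ q * M := by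
    intro t M hTt hM hBnd
    have ht0 : t₀ ≤ t := by linarith
    set e : ℝ → ℂ := fun θ => Complex.exp (-(∫ s in (t - θ)..t, lam s)) with hedef
    have step1 : x' t - lam t * x t
        = ∫ θ in Set.Icc 0 r, (x (t - θ) - x t * e θ) * h t θ ∂(ν t) := by
      rw [hxeq t ht0]
      nth_rewrite 1 [hlam t ht0]
      rw [← integral_mul_const, ← integral_sub (hxint t ht0)
        ((hlamint t ht0).mul_const (x t))]
      apply setIntegral_congr_fun measurableSet_Icc
      intro θ _
      ring
    have step2 : Yd t = ∫ θ in Set.Icc 0 r, (y (t - θ) - y t) * e θ * h t θ ∂(ν t) := by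
      have h0 : Yd t = (x' t - lam t * x t) * E t := rfl
      rw [h0, step1, ← integral_mul_const]
      apply setIntegral_congr_fun measurableSet_Icc
      intro θ hθ
      have hIθ : (∫ s in (t - θ)..t, lam s) = P t - P (t - θ) := hIeq t θ ht0 hθ.1 hθ.2
      show (x (t - θ) - x t * e θ) * h t θ * E t = (y (t - θ) - y t) * e θ * h t θ
      rw [hedef]
      simp only [hydef, hEdef, hIθ]
      rw [show -(P t - P (t - θ)) = -P t - (-P (t - θ)) by ring, Complex.exp_sub]
      field_simp [Complex.exp_ne_zero]
    have hecont : ContinuousOn (fun θ => ‖e θ‖) (Set.Icc 0 r) := by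
      have hg2 : ContinuousOn (fun θ => ‖Complex.exp (P (t - θ) - P t)‖) (Set.Icc 0 r) :=
        (((hPc.comp (continuous_const.sub continuous_id)).sub continuous_const).cexp.norm).continuousOn
      apply ContinuousOn.congr hg2
      intro θ hθ
      rw [hedef]
      simp only
      rw [hIeq t θ ht0 hθ.1 hθ.2, show -(P t - P (t - θ)) = P (t - θ) - P t by ring]
    have hInorm : IntegrableOn (fun θ => ‖e θ * h t θ‖) (Set.Icc 0 r) (ν t) :=
      (hlamint t ht0).norm
    have step3 : ‖Yd t‖ ≤ ∫ θ in Set.Icc 0 r, M * (θ * ‖e θ‖) ∂(ν t) := by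
      rw [step2]
      apply norm_integral_le_of_norm_le
      · apply Integrable.mono' (hInorm.const_mul (M * r))
        · exact ((continuousOn_const.mul (continuousOn_id.mul hecont)).aestronglyMeasurable
            measurableSet_Icc)
        · filter_upwards [ae_restrict_mem measurableSet_Icc,
            ae_restrict_of_ae (hh t ht0)] with θ hθ hhθ
          have h1 : ‖e θ * h t θ‖ = ‖e θ‖ := by rw [norm_mul, hhθ, mul_one]
          rw [Real.norm_eq_abs,
            abs_of_nonneg (mul_nonneg hM (mul_nonneg hθ.1 (norm_nonneg _))), h1]
          have hx1 : 0 ≤ M * (r - θ) * ‖e θ‖ :=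
            mul_nonneg (mul_nonneg hM (sub_nonneg.2 hθ.2)) (norm_nonneg _)
          nlinarith [hx1]
      · filter_upwards [ae_restrict_mem measurableSet_Icc,
          ae_restrict_of_ae (hh t ht0)] with θ hθ hhθ
        rw [norm_mul, norm_mul, hhθ, mul_one]
        have hyb : ‖y (t - θ) - y t‖ ≤ M * θ := by
          rcases eq_or_lt_of_le hθ.1 with h0 | h0
          · rw [← h0]
            simp
          · rw [norm_sub_rev]
            exact hBnd θ h0 hθ.2
        calc ‖y (t - θ) - y t‖ * ‖e θ‖
            ≤ (M * θ) * ‖e θ‖ := mul_le_mul_of_nonneg_right hyb (norm_nonneg _)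
          _ = M * (θ * ‖e θ‖) := by ring
    have step4 : (∫ θ in Set.Icc 0 r, M * (θ * ‖e θ‖) ∂(ν t)) = M * Vf t := by
      rw [hVfdef]
      exact integral_const_mul M _
    have step5 : g t ≤ M * q := by
      have hgYd : g t = ‖Yd t‖ := rfl
      rw [hgYd]
      calc ‖Yd t‖ ≤ M * Vf t := by rw [← step4]; exact step3
        _ ≤ M * q := mul_le_mul_of_nonneg_left (hT₀V t hTt) hM
    linarith [step5, mul_comm M q]
  -- the backward bound at T₀
  obtain ⟨D₀, hD₀pos, hD₀⟩ := hBndAt T₀ hT₀t₀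
  -- bridge lemma
  have hbridge : ∀ w εw M, T₀ ≤ w → 0 < εw → 0 ≤ M →
      (∀ θ, 0 ≤ θ → θ ≤ r → ‖y w - y (w - θ)‖ ≤ D₀ * θ) →
      (∀ σ, w < σ → σ < w + εw → g σ ≤ M) →
      ∀ s, w < s → s ≤ w + εw → ∀ θ, 0 < θ → θ ≤ r →
        ‖y s - y (s - θ)‖ ≤ (max M D₀) * θ := by
    intro w εw M hTw hεw hM0 hBw hgM s hws hsεw θ hθ0 hθr
    have hwt₀ : t₀ ≤ w := by linarith
    have hmax0 : 0 ≤ max M D₀ := le_trans hM0 (le_max_left _ _)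
    rcases le_or_gt w (s - θ) with hcase | hcase
    · obtain ⟨c, hc1, hc2, hc3⟩ := hmvt (s - θ) s (by linarith) (by linarith)
      rw [show s - (s - θ) = θ by ring] at hc3
      have hgc : g c ≤ M := hgM c (by linarith) (by linarith)
      calc ‖y s - y (s - θ)‖ ≤ g c * θ := hc3
        _ ≤ (max M D₀) * θ :=
          mul_le_mul_of_nonneg_right (hgc.trans (le_max_left _ _)) hθ0.le
    · have h1 : ‖y s - y (s - θ)‖ ≤ ‖y s - y w‖ + ‖y w - y (s - θ)‖ := by
        have := norm_add_le (y s - y w) (y w - y (s - θ))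
        rwa [sub_add_sub_cancel] at this
      obtain ⟨c, hc1, hc2, hc3⟩ := hmvt w s hwt₀ hws
      have hgc : g c ≤ M := hgM c hc1 (by linarith)
      have h2 : ‖y s - y w‖ ≤ M * (s - w) :=
        le_trans hc3 (mul_le_mul_of_nonneg_right hgc (by linarith))
      have h3 : ‖y w - y (s - θ)‖ ≤ D₀ * (w - (s - θ)) := by
        have := hBw (w - (s - θ)) (by linarith) (by linarith)
        rwa [show w - (w - (s - θ)) = s - θ by ring] at this
      calc ‖y s - y (s - θ)‖ ≤ M * (s - w) + D₀ * (w - (s - θ)) := by linarith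
        _ ≤ (max M D₀) * (s - w) + (max M D₀) * (w - (s - θ)) :=
            add_le_add (mul_le_mul_of_nonneg_right (le_max_left _ _) (by linarith))
              (mul_le_mul_of_nonneg_right (le_max_right _ _) (by linarith))
        _ = (max M D₀) * θ := by ring
  have hqD₀ : 0 ≤ q * D₀ := by positivity
  have hqD₀D₀ : q * D₀ ≤ D₀ := by nlinarith [hD₀pos.le, hq1]
  -- main boundedness
  have hgood : ∀ s, T₀ < s → g s ≤ q * D₀ := by
    have hBadcase : ¬ (∃ s, T₀ < s ∧ ¬ ∀ θ, 0 < θ → θ ≤ r → ‖y s - y (s - θ)‖ ≤ D₀ * θ) := by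
      intro hBadne'
      set Bad : Set ℝ :=
        {s : ℝ | T₀ < s ∧ ¬ ∀ θ, 0 < θ → θ ≤ r → ‖y s - y (s - θ)‖ ≤ D₀ * θ} with hBaddef
      have hBadne : Bad.Nonempty := hBadne'
      set u := sInf Bad with hudef
      have hBddB : BddBelow Bad := ⟨T₀, fun b hb => hb.1.le⟩
      have huT₀ : T₀ ≤ u := le_csInf hBadne (fun b hb => hb.1.le)
      have hAllBelow : ∀ s, T₀ < s → s < u → ∀ θ, 0 < θ → θ ≤ r →
          ‖y s - y (s - θ)‖ ≤ D₀ * θ := by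
        intro s hs1 hs2
        by_contra hc
        exact absurd (csInf_le hBddB (⟨hs1, hc⟩ : s ∈ Bad)) (not_le.2 hs2)
      have hgBelow : ∀ s, T₀ < s → s < u → g s ≤ q * D₀ := fun s h1 h2 =>
        key1 s D₀ h1.le hD₀pos.le (hAllBelow s h1 h2)
      have hBndu : ∀ θ, 0 ≤ θ → θ ≤ r → ‖y u - y (u - θ)‖ ≤ D₀ * θ := by
        rcases eq_or_lt_of_le huT₀ with he | hlt
        · rw [← he]; exact hD₀
        · intro θ hθ0 hθr
          rcases eq_or_lt_of_le hθ0 with h0 | h0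
          · rw [← h0]; simp
          · have := hbridge T₀ (u - T₀) (q * D₀) le_rfl (by linarith) hqD₀ hD₀
              (fun σ h1 h2 => hgBelow σ h1 (by linarith)) u hlt (by linarith) θ h0 hθr
            rwa [max_eq_right hqD₀D₀] at this
      have hUnotBad : u ∉ Bad := fun hmem => hmem.2 (fun θ a b => hBndu θ a.le b)
      have hBadNear : ∀ ε : ℝ, 0 < ε → ∃ s, s ∈ Bad ∧ u < s ∧ s < u + ε := by
        intro ε hε
        obtain ⟨s, hsB, hslt⟩ := Real.lt_sInf_add_pos hBadne hε
        refine ⟨s, hsB, ?_, hslt⟩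
        rcases eq_or_lt_of_le (csInf_le hBddB hsB) with he | hlt
        · rw [← he] at hsB; exact absurd hsB hUnotBad
        · exact hlt
      by_cases hb1 : ∃ C, ∀ σ, u < σ → σ ≤ u + 1 → g σ ≤ C
      · obtain ⟨C, hC⟩ := hb1
        have hC0 : (0:ℝ) ≤ C := le_trans (norm_nonneg (Yd (u+1))) (hC (u+1) (by linarith) le_rfl)
        set C₀ : ℝ := 2*(C+1) with hC₀def
        have hqC₀ : C ≤ q * C₀ := by rw [hC₀def]; nlinarith [hqhalf]
        have hind : ∀ n : ℕ, ∀ σ, u < σ → σ ≤ u + 1 → g σ ≤ q * max (q^n * C₀) D₀ := by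
          intro n
          induction n with
          | zero =>
            intro σ h1 h2
            calc g σ ≤ C := hC σ h1 h2
              _ ≤ q * C₀ := hqC₀
              _ ≤ q * max (q^0 * C₀) D₀ := by
                  apply mul_le_mul_of_nonneg_left _ hq0.le
                  rw [pow_zero, one_mul]; exact le_max_left _ _
          | succ n ih =>
            intro σ h1 h2
            have hMn0 : 0 ≤ q * max (q^n * C₀) D₀ :=
              mul_nonneg hq0.le (le_trans hD₀pos.le (le_max_right _ _))
            have hBndσ := hbridge u 1 (q * max (q^n * C₀) D₀) huT₀ one_pos hMn0
              hBndu (fun τ hτ1 hτ2 => ih τ hτ1 (by linarith)) σ h1 h2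
            have hk := key1 σ (max (q * max (q^n * C₀) D₀) D₀) (by linarith : T₀ ≤ σ)
              (le_trans hD₀pos.le (le_max_right _ _)) hBndσ
            refine le_trans hk (mul_le_mul_of_nonneg_left ?_ hq0.le)
            apply max_le
            · calc q * max (q^n * C₀) D₀ = max (q * (q^n * C₀)) (q * D₀) :=
                    mul_max_of_nonneg _ _ hq0.le
                _ ≤ max (q^(n+1) * C₀) D₀ :=
                    max_le_max (le_of_eq (by ring)) hqD₀D₀
            · exact le_max_right _ _
        have hqd : ∀ σ, u < σ → σ ≤ u + 1 → g σ ≤ q * D₀ := by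
          have hC₀pos : (0:ℝ) < C₀ := by rw [hC₀def]; linarith
          obtain ⟨n, hn⟩ := exists_pow_lt_of_lt_one
            (show (0:ℝ) < D₀/C₀ by positivity) hq1
          intro σ h1 h2
          have h3 := hind n σ h1 h2
          have hle : q^n * C₀ ≤ D₀ := by
            rw [lt_div_iff₀ hC₀pos] at hn
            linarith
          rwa [max_eq_right hle] at h3
        obtain ⟨sB, hsBmem, hsB1, hsB2⟩ := hBadNear 1 one_pos
        apply hsBmem.2
        intro θ h0 hθr
        have := hbridge u 1 (q * D₀) huT₀ one_pos hqD₀ hBndu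
          (fun τ h1 h2 => hqd τ h1 (by linarith)) sB hsB1 (by linarith) θ h0 hθr
        rwa [max_eq_right hqD₀D₀] at this
      · -- unbounded case: the chain argument
        push_neg at hb1
        obtain ⟨Ebar, hEbarpos, hEbar⟩ := hFwd u (u + 1) (by linarith) (by linarith)
        set C₁ : ℝ := max Ebar D₀ with hC₁def
        have hC₁pos : 0 < C₁ := lt_of_lt_of_le hEbarpos (le_max_left _ _)
        set q₂ : ℝ := (1 + q)/2 with hq₂def
        have hq₂q : q < q₂ := by rw [hq₂def]; linarith
        have hq₂1 : q₂ < 1 := by rw [hq₂def]; linarith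
        have hq₂0 : 0 < q₂ := by rw [hq₂def]; linarith
        set Γ : ℝ := q₂ * C₁ + 1 with hΓdef
        have hΓpos : 0 < Γ := by nlinarith [hq₂0, hC₁pos]
        have hΓC₁ : q₂ * C₁ < Γ := by rw [hΓdef]; linarith
        have hstep : ∀ t, u < t → t ≤ u + 1 → Γ ≤ g t →
            ∃ tp sp, u < sp ∧ sp < tp ∧ tp < t ∧ t - sp ≤ r ∧
              g t / q₂ ≤ g tp ∧ (t - sp) * (g t / q₂) ≤ ‖y t - y sp‖ := by
          intro t hut htu hΓt
          have hgt0 : 0 < g t := lt_of_lt_of_le hΓpos hΓt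
          have hqc : q * (g t / q₂) < g t := by
            have h1 : q / q₂ < 1 := (div_lt_one hq₂0).2 hq₂q
            calc q * (g t / q₂) = (q/q₂) * g t := by ring
              _ < 1 * g t := mul_lt_mul_of_pos_right h1 hgt0
              _ = g t := one_mul _
          have hnotB : ¬ ∀ θ, 0 < θ → θ ≤ r → ‖y t - y (t - θ)‖ ≤ (g t / q₂) * θ := by
            intro hB
            have := key1 t (g t / q₂) (by linarith : T₀ ≤ t) (by positivity) hB
            linarith
          push_neg at hnotB
          obtain ⟨θ, hθ0, hθr, hθgt⟩ := hnotB
          have husp : u < t - θ := by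
            by_contra hle
            push_neg at hle
            have hA : ‖y t - y u‖ ≤ Ebar * (t - u) := hEbar t (by linarith) htu
            have hB' : ‖y u - y (t - θ)‖ ≤ D₀ * (u - (t - θ)) := by
              have := hBndu (u - (t - θ)) (by linarith) (by linarith)
              rwa [show u - (u - (t - θ)) = t - θ by ring] at this
            have htri : ‖y t - y (t - θ)‖ ≤ ‖y t - y u‖ + ‖y u - y (t - θ)‖ := by
              have := norm_add_le (y t - y u) (y u - y (t - θ))
              rwa [sub_add_sub_cancel] at this
            have hb1' : ‖y t - y (t - θ)‖ ≤ C₁ * θ := by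
              calc ‖y t - y (t - θ)‖ ≤ Ebar * (t - u) + D₀ * (u - (t - θ)) := by linarith
                _ ≤ C₁ * (t - u) + C₁ * (u - (t - θ)) :=
                    add_le_add (mul_le_mul_of_nonneg_right (le_max_left _ _) (by linarith))
                      (mul_le_mul_of_nonneg_right (le_max_right _ _) (by linarith))
                _ = C₁ * θ := by ring
            have h2 : (g t / q₂) * θ < C₁ * θ := lt_of_lt_of_le hθgt hb1'
            have h3 : g t / q₂ < C₁ := lt_of_mul_lt_mul_right h2 hθ0.le
            rw [div_lt_iff₀ hq₂0] at h3
            nlinarith [h3]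
          obtain ⟨c, hc1, hc2, hc3⟩ := hmvt (t - θ) t (by linarith : t₀ ≤ t - θ) (by linarith)
          rw [show t - (t - θ) = θ by ring] at hc3
          have hgc : g t / q₂ ≤ g c := by
            have h5 : (g t / q₂) * θ ≤ g c * θ := le_trans hθgt.le hc3
            exact le_of_mul_le_mul_right h5 hθ0
          refine ⟨c, t - θ, husp, hc1, hc2, by linarith, hgc, ?_⟩
          rw [show t - (t - θ) = θ by ring, mul_comm]
          exact hθgt.le
        obtain ⟨t₁, hut₁, ht₁u, hΓt₁⟩ : ∃ t₁, u < t₁ ∧ t₁ ≤ u + 1 ∧ Γ ≤ g t₁ := by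
          obtain ⟨σ, h1, h2, h3⟩ := hb1 Γ
          exact ⟨σ, h1, h2, h3.le⟩
        have hex : ∀ p : {p : ℝ // u < p ∧ p ≤ u + 1 ∧ Γ ≤ g p},
            ∃ pr : {p : ℝ // u < p ∧ p ≤ u + 1 ∧ Γ ≤ g p} × ℝ,
              u < pr.2 ∧ pr.2 < (pr.1 : ℝ) ∧ (pr.1 : ℝ) < (p : ℝ) ∧ (p : ℝ) - pr.2 ≤ r ∧
              g p / q₂ ≤ g pr.1 ∧ ((p : ℝ) - pr.2) * (g (p:ℝ) / q₂) ≤ ‖y p - y pr.2‖ := by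
          rintro ⟨p, hp1, hp2, hp3⟩
          obtain ⟨tp, sp, h1, h2, h3, h4, h5, h6⟩ := hstep p hp1 hp2 hp3
          have hΓtp : Γ ≤ g tp := by
            have hgpq : g p ≤ g p / q₂ := by
              rw [le_div_iff₀ hq₂0]
              nlinarith [hp3, hΓpos]
            linarith
          exact ⟨(⟨tp, lt_trans h1 h2, by linarith, hΓtp⟩, sp), h1, h2, h3, h4, h5, h6⟩
        choose st hst using hex
        set Tc : ℕ → {p : ℝ // u < p ∧ p ≤ u + 1 ∧ Γ ≤ g p} :=
          fun n => Nat.rec ⟨t₁, hut₁, ht₁u, hΓt₁⟩ (fun _ a => (st a).1) n with hTcdef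
        have hTsucc : ∀ n, Tc (n+1) = (st (Tc n)).1 := fun n => rfl
        set S : ℕ → ℝ := fun n => (st (Tc n)).2 with hSdef
        have hprop : ∀ n, u < S n ∧ S n < (Tc (n+1) : ℝ) ∧ (Tc (n+1) : ℝ) < (Tc n : ℝ) ∧
            (Tc n : ℝ) - S n ≤ r ∧ g (Tc n) / q₂ ≤ g (Tc (n+1)) ∧
            ((Tc n : ℝ) - S n) * (g (Tc n : ℝ) / q₂) ≤ ‖y (Tc n) - y (S n)‖ := by
          intro n
          have := hst (Tc n)
          rw [← hTsucc n] at this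
          exact this
        have hTdec : ∀ n, (Tc (n+1) : ℝ) < (Tc n : ℝ) := fun n => (hprop n).2.2.1
        have hTanti : ∀ m n, m ≤ n → (Tc n : ℝ) ≤ (Tc m : ℝ) := by
          intro m n hmn
          induction n with
          | zero => rw [Nat.le_zero.1 hmn]
          | succ n ih =>
            rcases Nat.lt_or_ge m (n+1) with hlt | hge
            · exact le_trans (hTdec n).le (ih (Nat.lt_succ_iff.1 hlt))
            · rw [le_antisymm hmn hge]
        have hgrow : ∀ n, Γ * (1/q₂)^n ≤ g (Tc n) := by
          intro n
          induction n with
          | zero => simpa using (Tc 0).2.2.2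
          | succ n ih =>
            have h1 := (hprop n).2.2.2.2.1
            have he : Γ * (1/q₂)^(n+1) = (Γ * (1/q₂)^n) / q₂ := by
              rw [pow_succ]
              field_simp
            rw [he]
            calc (Γ * (1/q₂)^n)/q₂ ≤ g (Tc n) / q₂ := (div_le_div_iff_of_pos_right hq₂0).2 ih
              _ ≤ g (Tc (n+1)) := h1
        set v : ℝ := ⨅ n, (Tc n : ℝ) with hvdef
        have hbdd_below : BddBelow (Set.range (fun n => (Tc n : ℝ))) :=
          ⟨u, by rintro z ⟨n, rfl⟩; exact (Tc n).2.1.le⟩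
        have hvle : ∀ n, v ≤ (Tc n : ℝ) := fun n => ciInf_le hbdd_below n
        have huv : u ≤ v := le_ciInf (fun n => (Tc n).2.1.le)
        have hvlt : ∀ n, v < (Tc n : ℝ) := fun n => lt_of_le_of_lt (hvle (n+1)) (hTdec n)
        have hvt₁ : v < u + 1 := lt_of_lt_of_le (hvlt 0) (Tc 0).2.2.1
        have htendsto : Tendsto (fun n => (Tc n : ℝ)) atTop (𝓝 v) :=
          tendsto_atTop_ciInf (fun m n hmn => hTanti m n hmn) hbdd_below
        obtain ⟨Mv, hMvpos, hMv⟩ := hBndAt v (by linarith : t₀ < v)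
        obtain ⟨Ev, hEvpos, hEv⟩ := hFwd v (u + 1) (by linarith) hvt₁
        set C₂ : ℝ := max Ev Mv with hC₂def
        have hSv : ∀ n, S n ≤ v → g (Tc n) ≤ q₂ * C₂ := by
          intro n hSn
          have h1 := (hprop n).2.2.2.2.2
          have htri : ‖y (Tc n) - y (S n)‖ ≤ ‖y (Tc n) - y v‖ + ‖y v - y (S n)‖ := by
            have := norm_add_le (y (Tc n) - y v) (y v - y (S n))
            rwa [sub_add_sub_cancel] at this
          have hA : ‖y (Tc n) - y v‖ ≤ Ev * ((Tc n : ℝ) - v) := hEv _ (hvle n) (Tc n).2.2.1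
          have hvSr : v - S n ≤ r := by
            have := (hprop n).2.2.2.1
            linarith [hvle n]
          have hB' : ‖y v - y (S n)‖ ≤ Mv * (v - S n) := by
            have := hMv (v - S n) (by linarith [(hprop n).1]) hvSr
            rwa [show v - (v - S n) = S n by ring] at this
          have hC₂' : ‖y (Tc n) - y (S n)‖ ≤ C₂ * ((Tc n : ℝ) - S n) := by
            calc ‖y (Tc n) - y (S n)‖ ≤ Ev * ((Tc n:ℝ) - v) + Mv * (v - S n) := by linarith
              _ ≤ C₂ * ((Tc n:ℝ) - v) + C₂ * (v - S n) :=
                  add_le_add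
                    (mul_le_mul_of_nonneg_right (le_max_left _ _) (by linarith [hvle n]))
                    (mul_le_mul_of_nonneg_right (le_max_right _ _) (by linarith))
              _ = C₂ * ((Tc n:ℝ) - S n) := by ring
          have hpos : 0 < (Tc n : ℝ) - S n := by linarith [(hprop n).2.1, hTdec n]
          have h2 : ((Tc n:ℝ) - S n) * (g (Tc n)/q₂) ≤ ((Tc n:ℝ) - S n) * C₂ := by
            calc ((Tc n:ℝ) - S n) * (g (Tc n)/q₂) ≤ ‖y (Tc n) - y (S n)‖ := h1
              _ ≤ C₂ * ((Tc n:ℝ) - S n) := hC₂'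
              _ = ((Tc n:ℝ) - S n) * C₂ := by ring
          have h3 : g (Tc n)/q₂ ≤ C₂ := le_of_mul_le_mul_left h2 hpos
          rw [div_le_iff₀ hq₂0] at h3
          linarith
        obtain ⟨k₁, hk₁⟩ : ∃ k₁, q₂ * C₂ < Γ * (1/q₂)^k₁ := by
          have h1q₂ : 1 < 1/q₂ := by rw [lt_div_iff₀ hq₂0]; linarith
          obtain ⟨k₁, hk₁⟩ := pow_unbounded_of_one_lt ((q₂ * C₂)/Γ) h1q₂
          refine ⟨k₁, ?_⟩
          rw [div_lt_iff₀ hΓpos] at hk₁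
          linarith
        have hSvgt : ∀ n, k₁ ≤ n → v < S n := by
          intro n hn
          by_contra hle
          push_neg at hle
          have h1 := hSv n hle
          have h2 : Γ * (1/q₂)^k₁ ≤ Γ * (1/q₂)^n := by
            apply mul_le_mul_of_nonneg_left _ hΓpos.le
            apply pow_le_pow_right₀ (by rw [le_div_iff₀ hq₂0]; linarith) hn
          linarith [hgrow n]
        obtain ⟨k₂, hk₂⟩ : ∃ k₂, q₂^(k₂+1) < Γ * (1 - q₂) / (2 * Ev) := by
          have h1mq : (0:ℝ) < 1 - q₂ := by linarith
          obtain ⟨k₂, hk₂⟩ := exists_pow_lt_of_lt_one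
            (show (0:ℝ) < Γ * (1 - q₂)/(2*Ev) by positivity) hq₂1
          exact ⟨k₂, lt_of_le_of_lt
            (pow_le_pow_of_le_one hq₂0.le hq₂1.le (Nat.le_succ k₂)) hk₂⟩
        set k₀ := max k₁ k₂ with hk₀def
        set B : ℝ := 2 * Ev * ((Tc k₀ : ℝ) - v) / Γ with hBdef
        have hTvpos : 0 < (Tc k₀ : ℝ) - v := by linarith [hvlt k₀]
        have hBnonneg : 0 ≤ B := by
          apply div_nonneg _ hΓpos.le
          nlinarith [hEvpos]
        have hq₂ne : q₂ ≠ 0 := ne_of_gt hq₂0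
        have hΓne : Γ ≠ 0 := ne_of_gt hΓpos
        have hstepb : ∀ k, k₀ ≤ k → (Tc k : ℝ) - (Tc (k+1) : ℝ) ≤ B * q₂^(k+1) := by
          intro k hk
          have hSk : v < S k := hSvgt k (le_trans (le_max_left _ _) hk)
          have h1 := (hprop k).2.2.2.2.2
          have hSku : S k ≤ u + 1 := by linarith [(hprop k).2.1, (Tc (k+1)).2.2.1]
          have t1 : ‖y (Tc k) - y v‖ ≤ Ev * ((Tc k:ℝ) - v) := hEv _ (hvle k) (Tc k).2.2.1
          have t2 : ‖y (S k) - y v‖ ≤ Ev * (S k - v) := hEv _ hSk.le hSku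
          have htri : ‖y (Tc k) - y (S k)‖ ≤ Ev * ((Tc k:ℝ) - v) + Ev * (S k - v) := by
            have h4 := norm_add_le (y (Tc k) - y v) (y v - y (S k))
            rw [sub_add_sub_cancel] at h4
            have t2' : ‖y v - y (S k)‖ = ‖y (S k) - y v‖ := norm_sub_rev _ _
            linarith
          have hTk₀ : (Tc k:ℝ) ≤ (Tc k₀ : ℝ) := hTanti k₀ k hk
          have hSkTk : S k - v ≤ (Tc k:ℝ) - v := by linarith [(hprop k).2.1, hTdec k]
          have h2 : ‖y (Tc k) - y (S k)‖ ≤ 2 * Ev * ((Tc k₀:ℝ) - v) := by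
            nlinarith [hEvpos, hvlt k]
          have hgTk : Γ * (1/q₂)^k ≤ g (Tc k) := hgrow k
          have hgTkpos : 0 < g (Tc k) := lt_of_lt_of_le (by positivity) hgTk
          have h3 : ((Tc k:ℝ) - S k) * (g (Tc k)/q₂) ≤ 2 * Ev * ((Tc k₀:ℝ) - v) :=
            le_trans h1 h2
          have h4 : (Tc k:ℝ) - S k ≤ 2 * Ev * ((Tc k₀:ℝ) - v) * q₂ / g (Tc k) := by
            rw [le_div_iff₀ hgTkpos]
            calc ((Tc k:ℝ) - S k) * g (Tc k)
                = (((Tc k:ℝ) - S k) * (g (Tc k)/q₂)) * q₂ := by field_simp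
              _ ≤ (2 * Ev * ((Tc k₀:ℝ) - v)) * q₂ := mul_le_mul_of_nonneg_right h3 hq₂0.le
          have h5 : 2 * Ev * ((Tc k₀:ℝ) - v) * q₂ / g (Tc k) ≤ B * q₂^(k+1) := by
            have hA0 : 0 ≤ 2 * Ev * ((Tc k₀:ℝ) - v) * q₂ := by positivity
            have hd0 : 0 < Γ / q₂^k := by positivity
            have hgk : Γ / q₂^k ≤ g (Tc k) := by
              have he : Γ * (1/q₂)^k = Γ / q₂^k := by
                rw [one_div, inv_pow, div_eq_mul_inv]
              rw [← he]
              exact hgrow k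
            calc 2*Ev*((Tc k₀:ℝ)-v)*q₂ / g (Tc k)
                ≤ (2*Ev*((Tc k₀:ℝ)-v)*q₂) / (Γ/q₂^k) :=
                  div_le_div_of_nonneg_left hA0 hd0 hgk
              _ = B * q₂^(k+1) := by
                  rw [hBdef]
                  field_simp
                  ring
          linarith [(hprop k).2.1]
        have htel : ∀ K : ℕ, (Tc k₀ : ℝ) - (Tc (k₀ + K) : ℝ)
            ≤ B * q₂ * (q₂^k₀ - q₂^(k₀ + K)) / (1 - q₂) := by
          intro K
          induction K with
          | zero => simp
          | succ K ih =>
            have h1 := hstepb (k₀ + K) (Nat.le_add_right _ _)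
            have h1mq : (1:ℝ) - q₂ ≠ 0 := by intro hc; linarith
            have halg : B*q₂*(q₂^k₀ - q₂^(k₀+K))/(1-q₂) + B*q₂^(k₀+K+1)
                = B*q₂*(q₂^k₀ - q₂^(k₀+K+1))/(1-q₂) := by
              field_simp
              ring
            have heq2 : k₀ + (K+1) = (k₀ + K) + 1 := rfl
            rw [heq2]
            linarith [ih, h1, halg]
        have hfin : (Tc k₀:ℝ) - v ≤ B * q₂ * q₂^k₀ / (1 - q₂) := by
          have h1mq : (0:ℝ) < 1 - q₂ := by linarith
          have hcomp : Tendsto (fun K : ℕ => (Tc (k₀ + K) : ℝ)) atTop (𝓝 v) := by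
            have h2 : (fun K : ℕ => (Tc (k₀ + K) : ℝ))
                = (fun n : ℕ => (Tc n : ℝ)) ∘ (fun K => k₀ + K) := rfl
            have h3 : (fun K : ℕ => (Tc (k₀ + K) : ℝ)) = fun K : ℕ => (Tc (K + k₀) : ℝ) := by
              funext K; rw [Nat.add_comm]
            rw [h3]
            exact htendsto.comp (tendsto_add_atTop_nat k₀)
          have hlim : Tendsto (fun K : ℕ => (Tc k₀:ℝ) - (Tc (k₀ + K) : ℝ)) atTop
              (𝓝 ((Tc k₀:ℝ) - v)) := tendsto_const_nhds.sub hcomp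
          apply le_of_tendsto hlim
          filter_upwards with K
          have h3 := htel K
          have h4 : B*q₂*(q₂^k₀ - q₂^(k₀+K)) ≤ B*q₂*q₂^k₀ := by
            have h5 : 0 ≤ B*q₂*q₂^(k₀+K) :=
              mul_nonneg (mul_nonneg hBnonneg hq₂0.le) (pow_nonneg hq₂0.le _)
            nlinarith [h5]
          calc (Tc k₀:ℝ) - (Tc (k₀+K):ℝ) ≤ B*q₂*(q₂^k₀ - q₂^(k₀+K))/(1-q₂) := h3
            _ ≤ B*q₂*q₂^k₀/(1-q₂) := by gcongr
        have hρ : B * q₂ * q₂^k₀ / (1 - q₂) < (Tc k₀:ℝ) - v := by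
          have h1 : q₂^(k₀+1) < Γ * (1 - q₂)/(2*Ev) :=
            lt_of_le_of_lt
              (pow_le_pow_of_le_one hq₂0.le hq₂1.le (Nat.succ_le_succ (le_max_right _ _))) hk₂
          have h2 : 2*Ev*q₂^(k₀+1) < Γ*(1-q₂) := by
            rw [lt_div_iff₀ (by positivity : (0:ℝ) < 2*Ev)] at h1
            linarith
          have h1mq : (0:ℝ) < 1 - q₂ := by linarith
          rw [div_lt_iff₀ h1mq]
          have key := mul_lt_mul_of_pos_left h2
            (show (0:ℝ) < ((Tc k₀:ℝ) - v)/Γ by positivity)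
          calc B * q₂ * q₂^k₀ = ((Tc k₀:ℝ) - v)/Γ * (2*Ev*q₂^(k₀+1)) := by
                rw [hBdef, pow_succ]; ring
            _ < ((Tc k₀:ℝ) - v)/Γ * (Γ*(1-q₂)) := key
            _ = ((Tc k₀:ℝ) - v) * (1-q₂) := by field_simp
        linarith [hfin, hρ]
    intro s hs
    have hBnds : ∀ θ, 0 < θ → θ ≤ r → ‖y s - y (s - θ)‖ ≤ D₀ * θ := by
      by_contra hc
      exact hBadcase ⟨s, hs, hc⟩
    exact key1 s D₀ hs.le hD₀pos.le hBnds
  -- geometric decay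
  have hdec : ∀ n : ℕ, ∀ s, T₀ + 1 + (n:ℝ) * r ≤ s → g s ≤ q^(n+1) * D₀ := by
    intro n
    induction n with
    | zero =>
      intro s hs
      push_cast at hs
      have : T₀ < s := by linarith
      calc g s ≤ q * D₀ := hgood s this
        _ = q^1 * D₀ := by rw [pow_one]
    | succ n ih =>
      intro s hs
      push_cast at hs
      have hnr : (0:ℝ) ≤ (n:ℝ) * r := by positivity
      have hBnds : ∀ θ, 0 < θ → θ ≤ r → ‖y s - y (s - θ)‖ ≤ (q^(n+1)*D₀) * θ := by
        intro θ h0 hr'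
        obtain ⟨c, hc1, hc2, hc3⟩ := hmvt (s - θ) s (by linarith) (by linarith)
        have hgc : g c ≤ q^(n+1)*D₀ := ih c (by push_cast; linarith)
        rw [show s - (s - θ) = θ by ring] at hc3
        calc ‖y s - y (s - θ)‖ ≤ g c * θ := hc3
          _ ≤ (q^(n+1)*D₀)*θ := mul_le_mul_of_nonneg_right hgc h0.le
      have hk := key1 s (q^(n+1)*D₀) (by linarith) (by positivity) hBnds
      calc g s ≤ q * (q^(n+1)*D₀) := hk
        _ = q^(n+1+1)*D₀ := by ring
  -- Yd tends to 0
  have hg0 : Tendsto Yd atTop (𝓝 0) := by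
    rw [tendsto_zero_iff_norm_tendsto_zero]
    rw [Metric.tendsto_atTop]
    intro ε hε
    obtain ⟨n, hn⟩ := exists_pow_lt_of_lt_one (show (0:ℝ) < ε/D₀ by positivity) hq1
    refine ⟨T₀ + 1 + (n:ℝ)*r, fun t ht => ?_⟩
    rw [Real.dist_eq, sub_zero, abs_of_nonneg (norm_nonneg _)]
    have h1 : q^(n+1) ≤ q^n := pow_le_pow_of_le_one hq0.le hq1.le (Nat.le_succ n)
    rw [lt_div_iff₀ hD₀pos] at hn
    calc ‖Yd t‖ ≤ q^(n+1)*D₀ := hdec n t ht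
      _ ≤ q^n*D₀ := mul_le_mul_of_nonneg_right h1 hD₀pos.le
      _ < ε := hn
  -- conclusion
  have hfinal : (fun t => x' t * Complex.exp (-(∫ s in t₀..t, lam s)))
      =ᶠ[atTop] (fun t => Yd t + lam t * x t * Complex.exp (-(∫ s in t₀..t, lam s))) := by
    filter_upwards [eventually_ge_atTop (t₀ - r)] with t ht
    rw [hPeqI t ht, hYddef]
    simp only [hEdef]
    ring
  have hsum : Tendsto (fun t => Yd t + lam t * x t * Complex.exp (-(∫ s in t₀..t, lam s)))
      atTop (𝓝 L) := by
    have := hg0.add hL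
    rwa [zero_add] at this
  exact Filter.Tendsto.congr' hfinal.symm hsum
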